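/- arXiv:1902.09844 — 3 statements merged into one kernel-verified Lean document; each statement's English description precedes it below -/
import Mathlib

section
/- Every model of the theory Ω has an infinite universe; that is, if M is a structure interpreting ∈, ⊆, ∪, \ and Pow satisfying the four axioms of Ω, then the domain of M is infinite. -/
/-- A first-order structure for the theory Ω: binary relations ∈ and ⊆,
binary operations ∪ and \, a unary operation Pow, satisfying the four axioms. -/
structure OmegaStructure (M : Type*) where
  mem : M → M → Prop
  subset : M → M → Prop
  union : M → M → M
  sdiff : M → M → M
  pow : M → M
  ax1 : ∀ x y z, mem x (union y z) ↔ mem x y ∨ mem x z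
  ax2 : ∀ x y z, mem x (sdiff y z) ↔ mem x y ∧ ¬ mem x z
  ax3 : ∀ x y, subset x y ↔ ∀ z, mem z x → mem z y
  ax4 : ∀ x y, mem x (pow y) ↔ subset x y

namespace OmegaAux

variable {M : Type*} (S : OmegaStructure M)

/-- The sequence `b₀ = w \ w`, `bₙ₊₁ = Pow bₙ`. -/
def seq (w : M) : ℕ → M
  | 0 => S.sdiff w w
  | n + 1 => S.pow (seq w n)

lemma not_mem_seq_zero (w z : M) : ¬ S.mem z (seq S w 0) := by
  intro h
  exact ((S.ax2 z w w).1 h).2 ((S.ax2 z w w).1 h).1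

lemma mem_seq_succ (w z : M) (n : ℕ) :
    S.mem z (seq S w (n + 1)) ↔ ∀ y, S.mem y z → S.mem y (seq S w n) := by
  rw [show seq S w (n + 1) = S.pow (seq S w n) from rfl, S.ax4, S.ax3]

lemma seq_chain (w : M) : ∀ n z, S.mem z (seq S w n) → S.mem z (seq S w (n + 1)) := by
  intro n
  induction n with
  | zero => intro z h; exact absurd h (not_mem_seq_zero S w z)
  | succ n ih =>
    intro z h
    rw [mem_seq_succ] at h ⊢
    exact fun y hy => ih y (h y hy)

lemma seq_chain_le (w : M) {m n : ℕ} (h : m ≤ n) :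
    ∀ z, S.mem z (seq S w m) → S.mem z (seq S w n) := by
  induction h with
  | refl => exact fun z hz => hz
  | step h ih => exact fun z hz => seq_chain S w _ z (ih z hz)

lemma mem_seq_self_succ (w : M) (n : ℕ) : S.mem (seq S w n) (seq S w (n + 1)) := by
  rw [mem_seq_succ]; exact fun y hy => hy

lemma not_mem_seq_self (w : M) : ∀ n, ¬ S.mem (seq S w n) (seq S w n) := by
  intro n
  induction n with
  | zero => exact not_mem_seq_zero S w _
  | succ n ih =>
    intro h
    rw [mem_seq_succ] at h
    exact ih (h _ (mem_seq_self_succ S w n))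

lemma seq_injective (w : M) : Function.Injective (seq S w) := by
  have key : ∀ m n : ℕ, m < n → seq S w m ≠ seq S w n := by
    intro m n hmn he
    apply not_mem_seq_self S w m
    have h1 : S.mem (seq S w m) (seq S w (m + 1)) := mem_seq_self_succ S w m
    have h2 : S.mem (seq S w m) (seq S w n) := seq_chain_le S w hmn _ h1
    rw [← he] at h2
    exact h2
  intro m n he
  rcases lt_trichotomy m n with h | h | h
  · exact absurd he (key m n h)
  · exact h
  · exact absurd he.symm (key n m h)

end OmegaAux

/-- Every model of Ω has an infinite universe. -/
theorem omegaModel_infinite (M : Type*) [Nonempty M] (S : OmegaStructure M) :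
    Infinite M := by
  obtain ⟨w⟩ := ‹Nonempty M›
  exact Infinite.of_injective _ (OmegaAux.seq_injective S w)
end

section
/- Let Δ be a transitive set, let W ⊆ Δ, and define the binary relation R on Δ \ W by: (s,t) ∈ R iff there exists u ∈ W with u ∈ s and t ∈ u. Suppose Δ \ W satisfies Trans² with respect to W, i.e., for all z ∈ Δ \ W, u ∈ z with u ∈ W, and v ∈ u, we have v ∈ Δ \ W. Then for every d ∈ Δ \ W and every C ⊆ Δ \ W: d ⊆ (Δ \ W) ∪ {u ∈ W | u ⊆ C} if and only if for all t, (d,t) ∈ R implies t ∈ C. -/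
/-- Semantic core of the encoding of ∀R.C into the roleless fragment LC^Ω:
with roles simulated by connector elements in W, d satisfies the encoded concept
Pow(¬U ⊔ Pow(C)) exactly when all its R-successors satisfy C. -/
theorem encoding_forall_role (Δ W : ZFSet) (hΔ : Δ.IsTransitive) (hW : W ⊆ Δ)
    (htrans2 : ∀ z ∈ Δ, z ∉ W → ∀ u ∈ z, u ∈ W → ∀ v ∈ u, v ∈ Δ ∧ v ∉ W)
    (d : ZFSet) (hd : d ∈ Δ) (hdW : d ∉ W)
    (C : ZFSet) (hC : C ⊆ Δ \ W) :
    d ⊆ (Δ \ W) ∪ W.sep (fun u => u ⊆ C) ↔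
      ∀ t : ZFSet, (∃ u, u ∈ W ∧ u ∈ d ∧ t ∈ u) → t ∈ C := by
  constructor
  · rintro h t ⟨u, huW, hud, htu⟩
    have := h hud
    rw [ZFSet.mem_union] at this
    rcases this with h1 | h1
    · exact absurd huW (ZFSet.mem_sdiff.1 h1).2
    · exact (ZFSet.mem_sep.1 h1).2 htu
  · intro h x hxd
    rw [ZFSet.mem_union]
    by_cases hxW : x ∈ W
    · exact Or.inr (ZFSet.mem_sep.2 ⟨hxW, fun t ht => h t ⟨x, hxW, hxd, ht⟩⟩)
    · exact Or.inl (ZFSet.mem_sdiff.2 ⟨hΔ.mem_trans hxd hd, hxW⟩)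
end

section
/- Let Δ be a transitive set in a model of Ω, let e be the relation (x,y) ∈ e iff y ∈ x on Δ, and for each concept C interpreted as Cᴵ ⊆ Δ define the ALCOI translation where Pow(D) becomes ∀e.D. Then interpreting ∀e.D as {x ∈ Δ | ∀y ((x,y) ∈ e → y ∈ Dᴵ)} and Pow(D) as Pow(Dᴵ) ∩ Δ yields identical sets, and this identity is preserved under all Boolean concept constructors; hence the interpretations of any concept and of its translation agree on all elements of Δ. -/
/-- LCConcepts of the roleless fragment LC^Ω: atoms, ⊤, ⊥, ⊓, ⊔, ¬, \, Pow. -/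
inductive LCConcept (α : Type*) where
  | atom (a : α)
  | top
  | bot
  | neg (C : LCConcept α)
  | inter (C D : LCConcept α)
  | union (C D : LCConcept α)
  | sdiff (C D : LCConcept α)
  | pow (C : LCConcept α)

/-- Set-theoretic interpretation: Pow(C) is interpreted as Pow(Cᴵ) ∩ Δ. -/
def interpS {α : Type*} (Δ : ZFSet) (v : α → ZFSet) : LCConcept α → ZFSet
  | .atom a => v a
  | .top => Δ
  | .bot => ∅
  | .neg C => Δ \ interpS Δ v C
  | .inter C D => interpS Δ v C ∩ interpS Δ v D
  | .union C D => interpS Δ v C ∪ interpS Δ v D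
  | .sdiff C D => interpS Δ v C \ interpS Δ v D
  | .pow C => ZFSet.powerset (interpS Δ v C) ∩ Δ

/-- Modal interpretation of the translation: the translated subconcept ∀e.Dᵀ of
Pow(D) is interpreted as {x ∈ Δ | ∀ y, (x,y) ∈ e → y ∈ Dᵀᴵ}, where (x,y) ∈ e
iff y ∈ x; the translation commutes with all other constructors. -/
def interpT {α : Type*} (Δ : ZFSet) (v : α → ZFSet) : LCConcept α → ZFSet
  | .atom a => v a
  | .top => Δ
  | .bot => ∅
  | .neg C => Δ \ interpT Δ v C
  | .inter C D => interpT Δ v C ∩ interpT Δ v D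
  | .union C D => interpT Δ v C ∪ interpT Δ v D
  | .sdiff C D => interpT Δ v C \ interpT Δ v D
  | .pow C => Δ.sep (fun x => ∀ y, y ∈ x → y ∈ interpT Δ v C)

/-- Over a transitive domain Δ, the interpretation of any concept and of its
ALCOI translation (where Pow becomes ∀e) agree on all elements of Δ. -/
theorem interp_translation_agree {α : Type*} (Δ : ZFSet) (hΔ : Δ.IsTransitive)
    (v : α → ZFSet) (hv : ∀ a, v a ⊆ Δ) :
    ∀ C : LCConcept α, ∀ x ∈ Δ, (x ∈ interpS Δ v C ↔ x ∈ interpT Δ v C) := by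
  intro C
  induction C with
  | atom a => intro x hx; rfl
  | top => intro x hx; rfl
  | bot => intro x hx; rfl
  | neg C ih =>
    intro x hx
    simp only [interpS, interpT, ZFSet.mem_sdiff]
    exact and_congr_right fun _ => not_congr (ih x hx)
  | inter C D ihC ihD =>
    intro x hx
    simp only [interpS, interpT, ZFSet.mem_inter]
    exact and_congr (ihC x hx) (ihD x hx)
  | union C D ihC ihD =>
    intro x hx
    simp only [interpS, interpT, ZFSet.mem_union]
    exact or_congr (ihC x hx) (ihD x hx)
  | sdiff C D ihC ihD =>
    intro x hx
    simp only [interpS, interpT, ZFSet.mem_sdiff]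
    exact and_congr (ihC x hx) (not_congr (ihD x hx))
  | pow C ih =>
    intro x hx
    simp only [interpS, interpT, ZFSet.mem_inter, ZFSet.mem_powerset, ZFSet.mem_sep]
    constructor
    · rintro ⟨hsub, -⟩
      exact ⟨hx, fun y hy => (ih y (hΔ.mem_trans hy hx)).mp (hsub hy)⟩
    · rintro ⟨-, h⟩
      exact ⟨fun y hy => (ih y (hΔ.mem_trans hy hx)).mpr (h y hy), hx⟩
end
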